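/- Let 0 < α, β < 1 with α + β < 1, and let Λ = {λ_k} be an increasing sequence of positive numbers with λ₁ > 1 and λ_k → ∞ such that λ_k / k^{1−(α+β)} decreases to 0. For an integer N ≥ 5, set t_j := (Σ_{i=1}^{j} 1/λ_i)^{−1}, let A_{i,j} be the rectangle [ (πi − απ/2)/(N + 1/2 − α/2), (π(i+1) − απ/2)/(N + 1/2 − α/2) ) × [ (πj − βπ/2)/(N + 1/2 − β/2), (π(j+1) − βπ/2)/(N + 1/2 − β/2) ), let W := { (i,j) : j < i < 2j, 1 < j < (N−1)/2 }, and define f_N(x,y) := Σ_{(i,j)∈W} t_j · 1_{A_{i,j}}(x,y) · sin[(N + 1/2 − α/2)x + απ/2] · sin[(N + 1/2 − β/2)y + βπ/2]. Then there is a constant c > 0 independent of N such that ΛV₁(f_N) ≤ c and ΛV₂(f_N) ≤ c; in particular f_N ∈ PΛBV with PΛV(f_N) bounded uniformly in N. -/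

import Mathlib

open MeasureTheory Filter Finset

noncomputable section

/-- Cesàro numbers `A_k^γ = (γ+1)⋯(γ+k)/k!`. -/
def cesaroA (γ : ℝ) (k : ℕ) : ℝ :=
  (∏ i ∈ Finset.range k, (γ + (i + 1))) / (Nat.factorial k)

/-- Fourier coefficients of a function of two variables. -/
def fourierCoef2 (f : ℝ → ℝ → ℝ) (m n : ℤ) : ℂ :=
  (1 / (4 * (Real.pi : ℂ) ^ 2)) *
    ∫ x in (0:ℝ)..(2 * Real.pi), ∫ y in (0:ℝ)..(2 * Real.pi),
      (f x y : ℂ) * Complex.exp (-Complex.I * m * x) * Complex.exp (-Complex.I * n * y)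

/-- Rectangular partial sums of the double trigonometric Fourier series. -/
def partialSum2 (f : ℝ → ℝ → ℝ) (M N : ℕ) (x y : ℝ) : ℂ :=
  ∑ m ∈ Finset.Icc (-(M:ℤ)) (M:ℤ), ∑ n ∈ Finset.Icc (-(N:ℤ)) (N:ℤ),
    fourierCoef2 f m n * Complex.exp (Complex.I * m * x) * Complex.exp (Complex.I * n * y)

/-- Cesàro `(C; -α, -β)` means of the double Fourier series of `f`. -/
def cesaroMean2 (α β : ℝ) (f : ℝ → ℝ → ℝ) (m n : ℕ) (x y : ℝ) : ℂ :=
  ((1 / (cesaroA (-α) m * cesaroA (-β) n) : ℝ) : ℂ) *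
    ∑ i ∈ Finset.range (m+1), ∑ j ∈ Finset.range (n+1),
      ((cesaroA (-α - 1) (m - i) * cesaroA (-β - 1) (n - j) : ℝ) : ℂ) * partialSum2 f i j x y

/-- A finite collection of pairwise nonoverlapping intervals in `[0, 2π]`. -/
def Nonoverlapping (n : ℕ) (I : Fin n → ℝ × ℝ) : Prop :=
  (∀ i, 0 ≤ (I i).1 ∧ (I i).1 < (I i).2 ∧ (I i).2 ≤ 2 * Real.pi) ∧
  Pairwise fun i j => Set.Ioo (I i).1 (I i).2 ∩ Set.Ioo (I j).1 (I j).2 = ∅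

/-- All sums `Σ |f(I_i, y)|/λ_i` appearing in the definition of `ΛV₁(f)`. -/
def V1sums (lam : ℕ → ℝ) (f : ℝ → ℝ → ℝ) : Set ℝ :=
  {v | ∃ (y : ℝ) (n : ℕ) (I : Fin n → ℝ × ℝ), Nonoverlapping n I ∧
    v = ∑ i : Fin n, |f (I i).2 y - f (I i).1 y| / lam ((i : ℕ) + 1)}

/-- All sums `Σ |f(x, J_j)|/λ_j` appearing in the definition of `ΛV₂(f)`. -/
def V2sums (lam : ℕ → ℝ) (f : ℝ → ℝ → ℝ) : Set ℝ :=
  {v | ∃ (x : ℝ) (n : ℕ) (J : Fin n → ℝ × ℝ), Nonoverlapping n J ∧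
    v = ∑ j : Fin n, |f x (J j).2 - f x (J j).1| / lam ((j : ℕ) + 1)}

/-- `f` has bounded partial `Λ`-variation. -/
def PLambdaBV (lam : ℕ → ℝ) (f : ℝ → ℝ → ℝ) : Prop :=
  BddAbove (V1sums lam f) ∧ BddAbove (V2sums lam f)

/-- `t_j = (Σ_{i=1}^j 1/λ_i)⁻¹`. -/
def tcoef (lam : ℕ → ℝ) (j : ℕ) : ℝ := (∑ i ∈ Finset.Icc 1 j, 1 / lam i)⁻¹

/-- The rectangle `A_{i,j}` from the construction of the counterexample. -/
def rectA (α β : ℝ) (N i j : ℕ) : Set (ℝ × ℝ) :=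
  (Set.Ico ((Real.pi * i - α * Real.pi / 2) / ((N : ℝ) + 1/2 - α/2))
           ((Real.pi * (i+1) - α * Real.pi / 2) / ((N : ℝ) + 1/2 - α/2))) ×ˢ
  (Set.Ico ((Real.pi * j - β * Real.pi / 2) / ((N : ℝ) + 1/2 - β/2))
           ((Real.pi * (j+1) - β * Real.pi / 2) / ((N : ℝ) + 1/2 - β/2)))

/-- The function `f_N` from the construction of the counterexample. -/
def fN (α β : ℝ) (lam : ℕ → ℝ) (N : ℕ) (x y : ℝ) : ℝ :=
  ∑ i ∈ Finset.range N, ∑ j ∈ Finset.range N,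
    if j < i ∧ i < 2 * j ∧ 1 < j ∧ 2 * j + 1 < N then
      tcoef lam j * Set.indicator (rectA α β N i j) (fun _ => (1:ℝ)) (x, y) *
        Real.sin (((N : ℝ) + 1/2 - α/2) * x + α * Real.pi / 2) *
        Real.sin (((N : ℝ) + 1/2 - β/2) * y + β * Real.pi / 2)
    else 0



namespace GS

lemma sin_diff_le (a b : ℝ) : |Real.sin a - Real.sin b| ≤ |a - b| := by
  rw [Real.sin_sub_sin]
  have h1 := Real.abs_sin_le_abs (x := (a-b)/2)
  have h2 := Real.abs_cos_le_one ((a+b)/2)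
  have h3 : |2 * Real.sin ((a-b)/2) * Real.cos ((a+b)/2)|
      = 2 * |Real.sin ((a-b)/2)| * |Real.cos ((a+b)/2)| := by
    rw [abs_mul, abs_mul]; norm_num
  rw [h3]
  have h4 : |(a-b)/2| = |a-b|/2 := by rw [abs_div]; norm_num
  rw [h4] at h1
  nlinarith [abs_nonneg (Real.sin ((a-b)/2)), abs_nonneg (a-b)]

/-- generic "cell function". -/
def cellFun (w : ℕ → ℝ) (θ c : ℝ) (τ : ℕ → ℝ) (m₁ m₂ : ℕ) (y : ℝ) : ℝ :=
  ∑ j ∈ Finset.Ico m₁ m₂, τ j * (if y ∈ Set.Ico (w j) (w (j+1)) then Real.sin (θ*y + c) else 0)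

lemma cell_unique {w : ℕ → ℝ} (hw : StrictMono w) {y : ℝ} {j j' : ℕ}
    (h : y ∈ Set.Ico (w j) (w (j+1))) (h' : y ∈ Set.Ico (w j') (w (j'+1))) : j = j' := by
  by_contra hne
  rcases Nat.lt_or_ge j j' with hlt | hge
  · have : w (j+1) ≤ w j' := hw.monotone (by omega)
    have := h.2; have := h'.1; linarith
  · have hlt : j' < j := by omega
    have : w (j'+1) ≤ w j := hw.monotone (by omega)
    have := h'.2; have := h.1; linarith

lemma cellFun_cases (w : ℕ → ℝ) (θ c : ℝ) (τ : ℕ → ℝ) (m₁ m₂ : ℕ) (hw : StrictMono w) (y : ℝ) :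
    ((∀ j, m₁ ≤ j → j < m₂ → y ∉ Set.Ico (w j) (w (j+1))) ∧ cellFun w θ c τ m₁ m₂ y = 0) ∨
    (∃ j, m₁ ≤ j ∧ j < m₂ ∧ y ∈ Set.Ico (w j) (w (j+1)) ∧
      cellFun w θ c τ m₁ m₂ y = τ j * Real.sin (θ*y + c)) := by
  by_cases h : ∃ j, m₁ ≤ j ∧ j < m₂ ∧ y ∈ Set.Ico (w j) (w (j+1))
  · obtain ⟨j, hj1, hj2, hy⟩ := h
    right
    refine ⟨j, hj1, hj2, hy, ?_⟩
    rw [cellFun, Finset.sum_eq_single j]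
    · simp [hy]
    · intro j' hj' hne
      have : y ∉ Set.Ico (w j') (w (j'+1)) := fun hy' => hne (cell_unique hw hy' hy)
      simp [this]
    · intro hj'
      exact absurd (Finset.mem_Ico.mpr ⟨hj1, hj2⟩) hj'
  · push_neg at h
    left
    refine ⟨fun j h1 h2 => h j h1 h2, ?_⟩
    rw [cellFun]
    apply Finset.sum_eq_zero
    intro j hj
    rw [Finset.mem_Ico] at hj
    simp [h j hj.1 hj.2]

lemma cellFun_pt_le {w : ℕ → ℝ} {θ c t : ℝ} {τ : ℕ → ℝ} {m₁ m₂ : ℕ}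
    (hθ : 0 < θ) (hw : StrictMono w) (hw0 : ∀ k, Real.sin (θ * w k + c) = 0)
    (ht : 0 ≤ t) (hτ : ∀ j, m₁ ≤ j → j < m₂ → |τ j| ≤ t) (y : ℝ) (k : ℕ) :
    |cellFun w θ c τ m₁ m₂ y| ≤ t * min 1 (θ * |y - w k|) := by
  have hrhs : 0 ≤ t * min 1 (θ * |y - w k|) := by
    apply mul_nonneg ht
    exact le_min (by norm_num) (by positivity)
  rcases cellFun_cases w θ c τ m₁ m₂ hw y with ⟨-, h0⟩ | ⟨j, hj1, hj2, hy, he⟩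
  · rw [h0]; simpa using hrhs
  · rw [he, abs_mul]
    have h1 : |Real.sin (θ*y+c)| ≤ 1 := Real.abs_sin_le_one _
    have h2 : |Real.sin (θ*y+c)| ≤ θ * |y - w k| := by
      have := sin_diff_le (θ*y+c) (θ*w k + c)
      rw [hw0 k, sub_zero] at this
      calc |Real.sin (θ*y+c)| ≤ |(θ*y+c) - (θ*w k + c)| := this
        _ = |θ * (y - w k)| := by ring_nf
        _ = θ * |y - w k| := by rw [abs_mul, abs_of_pos hθ]
    exact mul_le_mul (hτ j hj1 hj2) (le_min h1 h2) (abs_nonneg _) ht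

lemma cellFun_support {w : ℕ → ℝ} {θ c : ℝ} {τ : ℕ → ℝ} {m₁ m₂ : ℕ}
    (hw : StrictMono w) {y : ℝ} (hy : cellFun w θ c τ m₁ m₂ y ≠ 0) :
    y ∈ Set.Icc (w m₁) (w m₂) := by
  rcases cellFun_cases w θ c τ m₁ m₂ hw y with ⟨-, h0⟩ | ⟨j, hj1, hj2, hmem, he⟩
  · exact absurd h0 hy
  · constructor
    · exact le_trans (hw.monotone hj1) hmem.1
    · exact le_trans (le_of_lt hmem.2) (hw.monotone (by omega))

lemma min_add_min (x y : ℝ) (hx : 0 ≤ x) (hy : 0 ≤ y) :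
    min 1 x + min 1 y ≤ min 2 (x + y) := by
  apply le_min
  · have := min_le_left 1 x; have := min_le_left 1 y; linarith
  · have := min_le_right 1 x; have := min_le_right 1 y; linarith

lemma cellFun_diff_le {w : ℕ → ℝ} {θ c t : ℝ} {τ : ℕ → ℝ} {m₁ m₂ : ℕ}
    (hθ : 0 < θ) (hw : StrictMono w) (hw0 : ∀ k, Real.sin (θ * w k + c) = 0)
    (ht : 0 ≤ t) (hτ : ∀ j, m₁ ≤ j → j < m₂ → |τ j| ≤ t) {a b : ℝ} (hab : a ≤ b) :
    |cellFun w θ c τ m₁ m₂ b - cellFun w θ c τ m₁ m₂ a| ≤ t * min 2 (θ * (b - a)) := by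
  have hrhs : (0:ℝ) ≤ t * min 2 (θ * (b - a)) := by
    apply mul_nonneg ht
    apply le_min (by norm_num)
    have : 0 ≤ b - a := by linarith
    positivity
  by_cases hk : ∃ k, k ≤ m₂ ∧ w k ∈ Set.Icc a b
  · obtain ⟨k, -, hk1, hk2⟩ := hk
    have hb := cellFun_pt_le hθ hw hw0 ht hτ b k
    have ha := cellFun_pt_le hθ hw hw0 ht hτ a k
    have e1 : |b - w k| = b - w k := abs_of_nonneg (by linarith)
    have e2 : |a - w k| = w k - a := by rw [abs_sub_comm]; exact abs_of_nonneg (by linarith)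
    rw [e1] at hb; rw [e2] at ha
    have h3 : min 1 (θ*(b - w k)) + min 1 (θ*(w k - a)) ≤ min 2 (θ * (b - a)) := by
      have := min_add_min (θ*(b - w k)) (θ*(w k - a)) (mul_nonneg hθ.le (by linarith)) (mul_nonneg hθ.le (by linarith))
      have e3 : θ*(b - w k) + θ*(w k - a) = θ * (b - a) := by ring
      rw [e3] at this; exact this
    calc |cellFun w θ c τ m₁ m₂ b - cellFun w θ c τ m₁ m₂ a|
        ≤ |cellFun w θ c τ m₁ m₂ b| + |cellFun w θ c τ m₁ m₂ a| := abs_sub _ _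
      _ ≤ t * min 1 (θ*(b - w k)) + t * min 1 (θ*(w k - a)) := add_le_add hb ha
      _ = t * (min 1 (θ*(b - w k)) + min 1 (θ*(w k - a))) := by ring
      _ ≤ t * min 2 (θ * (b - a)) := mul_le_mul_of_nonneg_left h3 ht
  · push_neg at hk
    rcases cellFun_cases w θ c τ m₁ m₂ hw a with ⟨ha0, hA⟩ | ⟨j, hj1, hj2, hamem, hA⟩ <;>
      rcases cellFun_cases w θ c τ m₁ m₂ hw b with ⟨hb0, hB⟩ | ⟨j', hj1', hj2', hbmem, hB⟩
    · rw [hA, hB]; simpa using hrhs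
    · -- a zero-case, b in cell j' : impossible
      exfalso
      have h1 : w j' ∉ Set.Icc a b := hk j' (by omega)
      have h2 : w j' ≤ b := hbmem.1
      have h3 : w j' < a := by
        by_contra h
        exact h1 ⟨by linarith [not_lt.mp h], h2⟩
      exact ha0 j' hj1' hj2' ⟨by linarith, lt_of_le_of_lt hab hbmem.2⟩
    · -- a in cell j, b zero-case : impossible
      exfalso
      have h1 : w (j+1) ∉ Set.Icc a b := hk (j+1) (by omega)
      have h2 : a < w (j+1) := hamem.2
      have h3 : b < w (j+1) := by
        by_contra h
        exact h1 ⟨by linarith, not_lt.mp h⟩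
      exact hb0 j hj1 hj2 ⟨le_trans hamem.1 hab, h3⟩
    · -- both in cells
      have hjj : j = j' := by
        by_contra hne
        rcases Nat.lt_or_ge j j' with hlt | hge
        · have h1 : w (j+1) ∉ Set.Icc a b := hk (j+1) (by omega)
          have h2 : w (j+1) ≤ w j' := hw.monotone (by omega)
          exact h1 ⟨le_of_lt hamem.2, le_trans h2 hbmem.1⟩
        · have hlt : j' < j := by omega
          have h2 : w (j'+1) ≤ w j := hw.monotone (by omega)
          have := hbmem.2; have := hamem.1; linarith
      subst hjj
      rw [hA, hB, ← mul_sub, abs_mul]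
      have h1 : |Real.sin (θ*b+c) - Real.sin (θ*a+c)| ≤ min 2 (θ * (b - a)) := by
        apply le_min
        · have := Real.abs_sin_le_one (θ*b+c); have := Real.abs_sin_le_one (θ*a+c)
          have := abs_sub (Real.sin (θ*b+c)) (Real.sin (θ*a+c))
          linarith
        · have := sin_diff_le (θ*b+c) (θ*a+c)
          calc |Real.sin (θ*b+c) - Real.sin (θ*a+c)| ≤ |(θ*b+c) - (θ*a+c)| := this
            _ = |θ * (b - a)| := by ring_nf
            _ = θ * (b - a) := abs_of_nonneg (mul_nonneg hθ.le (by linarith))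
      exact mul_le_mul (hτ j hj1 hj2) h1 (abs_nonneg _) ht

lemma sum_min_le {θ s e : ℝ} (hθ : 0 < θ) (hse : s ≤ e) {n : ℕ} {I : Fin n → ℝ × ℝ}
    (hlt : ∀ i, (I i).1 < (I i).2)
    (hdisj : Pairwise fun i j => Set.Ioo (I i).1 (I i).2 ∩ Set.Ioo (I j).1 (I j).2 = ∅) :
    ∑ i : Fin n, (if ((I i).1 ∈ Set.Icc s e ∨ (I i).2 ∈ Set.Icc s e)
        then min 2 (θ * ((I i).2 - (I i).1)) else 0) ≤ θ * (e - s) + 4 := by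
  classical
  have h2θ : (0:ℝ) < 2/θ := by positivity
  set J : Fin n → Set ℝ := fun i =>
    if (I i).1 ∈ Set.Icc s e then Set.Ioo (I i).1 (min (I i).2 ((I i).1 + 2/θ))
    else if (I i).2 ∈ Set.Icc s e then Set.Ioo (max (I i).1 ((I i).2 - 2/θ)) (I i).2
    else ∅ with hJ
  set len : Fin n → ℝ := fun i =>
    if (I i).1 ∈ Set.Icc s e then min (I i).2 ((I i).1 + 2/θ) - (I i).1
    else if (I i).2 ∈ Set.Icc s e then (I i).2 - max (I i).1 ((I i).2 - 2/θ)
    else 0 with hlen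
  have hlen0 : ∀ i, 0 ≤ len i := by
    intro i
    rw [hlen]; dsimp only
    split_ifs with h1 h2
    · have := hlt i
      rcases min_cases (I i).2 ((I i).1 + 2/θ) with ⟨g1,g2⟩|⟨g1,g2⟩ <;> linarith
    · have := hlt i
      rcases max_cases (I i).1 ((I i).2 - 2/θ) with ⟨g1,g2⟩|⟨g1,g2⟩ <;> linarith
    · exact le_rfl
  have hvol : ∀ i, volume (J i) = ENNReal.ofReal (len i) := by
    intro i
    rw [hJ, hlen]; dsimp only
    split_ifs with h1 h2
    · exact Real.volume_Ioo
    · exact Real.volume_Ioo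
    · simp
  have htwo : θ * (2/θ) = 2 := by field_simp
  have hterm : ∀ i, (if ((I i).1 ∈ Set.Icc s e ∨ (I i).2 ∈ Set.Icc s e)
      then min 2 (θ * ((I i).2 - (I i).1)) else 0) = θ * len i := by
    intro i
    rw [hlen]; dsimp only
    by_cases h1 : (I i).1 ∈ Set.Icc s e
    · rw [if_pos (Or.inl h1), if_pos h1]
      have e1 : min (I i).2 ((I i).1 + 2/θ) - (I i).1 = min ((I i).2 - (I i).1) (2/θ) := by
        rcases min_cases (I i).2 ((I i).1 + 2/θ) with ⟨g1,g2⟩|⟨g1,g2⟩ <;>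
          rcases min_cases ((I i).2 - (I i).1) (2/θ) with ⟨f1,f2⟩|⟨f1,f2⟩ <;> linarith
      rw [e1, mul_min_of_nonneg _ _ hθ.le, htwo, min_comm]
    · by_cases h2 : (I i).2 ∈ Set.Icc s e
      · rw [if_pos (Or.inr h2), if_neg h1, if_pos h2]
        have e1 : (I i).2 - max (I i).1 ((I i).2 - 2/θ) = min ((I i).2 - (I i).1) (2/θ) := by
          rcases max_cases (I i).1 ((I i).2 - 2/θ) with ⟨g1,g2⟩|⟨g1,g2⟩ <;>
            rcases min_cases ((I i).2 - (I i).1) (2/θ) with ⟨f1,f2⟩|⟨f1,f2⟩ <;> linarith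
        rw [e1, mul_min_of_nonneg _ _ hθ.le, htwo, min_comm]
      · rw [if_neg (by tauto), if_neg h1, if_neg h2, mul_zero]
  have hsubIoo : ∀ i, J i ⊆ Set.Ioo (I i).1 (I i).2 := by
    intro i
    rw [hJ]; dsimp only
    split_ifs with h1 h2
    · exact Set.Ioo_subset_Ioo le_rfl (min_le_left _ _)
    · exact Set.Ioo_subset_Ioo (le_max_left _ _) le_rfl
    · exact Set.empty_subset _
  have hdisjJ : Pairwise (Function.onFun Disjoint J) := by
    intro i j hne
    have := hdisj hne
    exact Set.disjoint_of_subset (hsubIoo i) (hsubIoo j)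
      (Set.disjoint_iff_inter_eq_empty.mpr this)
  have hmeas : ∀ i, MeasurableSet (J i) := by
    intro i
    rw [hJ]; dsimp only
    split_ifs <;> first | exact measurableSet_Ioo | exact MeasurableSet.empty
  have hsubBig : ∀ i, J i ⊆ Set.Ioo (s - 2/θ) (e + 2/θ) := by
    intro i
    rw [hJ]; dsimp only
    split_ifs with h1 h2
    · exact Set.Ioo_subset_Ioo (by linarith [h1.1]) (le_trans (min_le_right _ _) (by linarith [h1.2]))
    · exact Set.Ioo_subset_Ioo (le_trans (by linarith [h2.1]) (le_max_right _ _)) (by linarith [h2.2])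
    · exact Set.empty_subset _
  have key : ∑ i : Fin n, ENNReal.ofReal (len i) ≤ ENNReal.ofReal (e - s + 4/θ) := by
    calc ∑ i : Fin n, ENNReal.ofReal (len i) = ∑ i : Fin n, volume (J i) := by
          exact Finset.sum_congr rfl (fun i _ => (hvol i).symm)
      _ = ∑' i : Fin n, volume (J i) := (tsum_fintype _).symm
      _ = volume (⋃ i, J i) := (measure_iUnion hdisjJ hmeas).symm
      _ ≤ volume (Set.Ioo (s - 2/θ) (e + 2/θ)) := measure_mono (Set.iUnion_subset hsubBig)
      _ = ENNReal.ofReal (e + 2/θ - (s - 2/θ)) := Real.volume_Ioo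
      _ = ENNReal.ofReal (e - s + 4/θ) := by congr 1; ring
  rw [← ENNReal.ofReal_sum_of_nonneg (fun i _ => hlen0 i)] at key
  have h4θ : (0:ℝ) < 4/θ := by positivity
  have hreal : ∑ i : Fin n, len i ≤ e - s + 4/θ :=
    (ENNReal.ofReal_le_ofReal_iff (by linarith)).mp key
  calc ∑ i : Fin n, (if ((I i).1 ∈ Set.Icc s e ∨ (I i).2 ∈ Set.Icc s e)
        then min 2 (θ * ((I i).2 - (I i).1)) else 0)
      = ∑ i : Fin n, θ * len i := Finset.sum_congr rfl (fun i _ => hterm i)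
    _ = θ * ∑ i : Fin n, len i := by rw [Finset.mul_sum]
    _ ≤ θ * (e - s + 4/θ) := mul_le_mul_of_nonneg_left hreal hθ.le
    _ = θ * (e - s) + 4 := by field_simp

section Weights
variable {lam : ℕ → ℝ}

lemma lam_mono (hmono : ∀ k, 1 ≤ k → lam k ≤ lam (k + 1)) :
    ∀ k l, 1 ≤ k → k ≤ l → lam k ≤ lam l := by
  intro k l hk hkl
  induction l, hkl using Nat.le_induction with
  | base => exact le_rfl
  | succ m hm ih => exact le_trans ih (hmono m (by omega))

lemma weightR (hpos : ∀ k, 1 ≤ k → 0 < lam k)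
    (hmono : ∀ k, 1 ≤ k → lam k ≤ lam (k + 1))
    (n K : ℕ) (b : ℕ → ℝ) (hb0 : ∀ i, 0 ≤ b i) (hb2 : ∀ i, b i ≤ 2)
    (hsum : ∑ i ∈ Finset.range n, b i ≤ 2 * K) :
    ∑ i ∈ Finset.range n, b i / lam (i+1) ≤ 2 * ∑ k ∈ Finset.range K, 1 / lam (k+1) := by
  have hmono' := lam_mono hmono
  have hposS : ∀ i : ℕ, 0 < lam (i+1) := fun i => hpos (i+1) (by omega)
  rcases le_or_gt n K with hnK | hKn
  · have h1 : ∑ i ∈ Finset.range n, b i / lam (i+1)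
        ≤ ∑ i ∈ Finset.range n, 2 * (1 / lam (i+1)) := by
      apply Finset.sum_le_sum
      intro i _
      rw [div_eq_mul_one_div]
      exact mul_le_mul_of_nonneg_right (hb2 i) (le_of_lt (one_div_pos.mpr (hposS i)))
    have h2 : ∑ i ∈ Finset.range n, 2 * (1/lam (i+1))
        ≤ ∑ i ∈ Finset.range K, 2 * (1/lam (i+1)) := by
      apply Finset.sum_le_sum_of_subset_of_nonneg (Finset.range_subset_range.mpr hnK)
      intro i _ _
      exact mul_nonneg (by norm_num) (le_of_lt (one_div_pos.mpr (hposS i)))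
    rw [Finset.mul_sum]
    exact le_trans h1 h2
  · have hsplit : ∑ i ∈ Finset.range n, b i / lam (i+1)
        = ∑ i ∈ Finset.range K, b i / lam (i+1) + ∑ i ∈ Finset.Ico K n, b i / lam (i+1) := by
      rw [Finset.range_eq_Ico, ← Finset.sum_Ico_consecutive _ (Nat.zero_le K) hKn.le, Finset.range_eq_Ico]
    have hsplitb : ∑ i ∈ Finset.range n, b i
        = ∑ i ∈ Finset.range K, b i + ∑ i ∈ Finset.Ico K n, b i := by
      rw [Finset.range_eq_Ico, ← Finset.sum_Ico_consecutive _ (Nat.zero_le K) hKn.le, Finset.range_eq_Ico]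
    have htail : ∑ i ∈ Finset.Ico K n, b i / lam (i+1)
        ≤ (∑ i ∈ Finset.Ico K n, b i) * (1 / lam (K+1)) := by
      rw [Finset.sum_mul]
      apply Finset.sum_le_sum
      intro i hi
      rw [Finset.mem_Ico] at hi
      rw [div_eq_mul_one_div]
      apply mul_le_mul_of_nonneg_left _ (hb0 i)
      apply one_div_le_one_div_of_le (hposS K)
      exact hmono' (K+1) (i+1) (by omega) (by omega)
    have htail2 : (∑ i ∈ Finset.Ico K n, b i) * (1 / lam (K+1))
        ≤ (2*K - ∑ i ∈ Finset.range K, b i) * (1 / lam (K+1)) := by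
      apply mul_le_mul_of_nonneg_right _ (le_of_lt (one_div_pos.mpr (hposS K)))
      rw [hsplitb] at hsum
      linarith
    have hwi : ∀ i ∈ Finset.range K, 1 / lam (K+1) ≤ 1 / lam (i+1) := by
      intro i hi
      rw [Finset.mem_range] at hi
      apply one_div_le_one_div_of_le (hposS i)
      exact hmono' (i+1) (K+1) (by omega) (by omega)
    have hmain : ∑ i ∈ Finset.range K, (b i * (1/lam (i+1)) + (2 - b i) * (1/lam (K+1)))
        ≤ ∑ i ∈ Finset.range K, 2 * (1/lam (i+1)) := by
      apply Finset.sum_le_sum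
      intro i hi
      have h2 : (2 - b i) * (1/lam (K+1)) ≤ (2 - b i) * (1/lam (i+1)) :=
        mul_le_mul_of_nonneg_left (hwi i hi) (by linarith [hb2 i])
      nlinarith [h2]
    have halg : ∑ i ∈ Finset.range K, (b i * (1/lam (i+1)) + (2 - b i) * (1/lam (K+1)))
        = ∑ i ∈ Finset.range K, b i / lam (i+1)
          + (2*K - ∑ i ∈ Finset.range K, b i) * (1 / lam (K+1)) := by
      rw [Finset.sum_add_distrib, ← Finset.sum_mul]
      congr 1
      · exact Finset.sum_congr rfl fun i _ => (div_eq_mul_one_div _ _).symm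
      · congr 1
        rw [Finset.sum_sub_distrib, Finset.sum_const, Finset.card_range]
        push_cast; ring
    rw [hsplit, Finset.mul_sum]
    calc ∑ i ∈ Finset.range K, b i / lam (i+1) + ∑ i ∈ Finset.Ico K n, b i / lam (i+1)
        ≤ ∑ i ∈ Finset.range K, b i / lam (i+1)
          + (2*(K:ℝ) - ∑ i ∈ Finset.range K, b i) * (1 / lam (K+1)) := by
          linarith [le_trans htail htail2]
      _ = ∑ i ∈ Finset.range K, (b i * (1/lam (i+1)) + (2 - b i) * (1/lam (K+1))) := halg.symm
      _ ≤ ∑ i ∈ Finset.range K, 2 * (1/lam (i+1)) := hmain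

lemma sum_inv_block (hpos : ∀ k, 1 ≤ k → 0 < lam k)
    (hmono : ∀ k, 1 ≤ k → lam k ≤ lam (k + 1)) (j a : ℕ) :
    ∑ k ∈ Finset.Ico a (a+j), 1/lam (k+1) ≤ ∑ k ∈ Finset.range j, 1/lam (k+1) := by
  have hmono' := lam_mono hmono
  have hposS : ∀ i : ℕ, 0 < lam (i+1) := fun i => hpos (i+1) (by omega)
  rw [Finset.sum_Ico_eq_sum_range]
  simp only [Nat.add_sub_cancel_left]
  apply Finset.sum_le_sum
  intro i _
  exact one_div_le_one_div_of_le (hposS i) (hmono' (i+1) (a+i+1) (by omega) (by omega))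

lemma sum_inv_triple (hpos : ∀ k, 1 ≤ k → 0 < lam k)
    (hmono : ∀ k, 1 ≤ k → lam k ≤ lam (k + 1)) (j : ℕ) :
    ∑ k ∈ Finset.range (3*j), 1/lam (k+1) ≤ 3 * ∑ k ∈ Finset.range j, 1/lam (k+1) := by
  have e : ∑ k ∈ Finset.range (3*j), 1/lam (k+1)
      = ∑ k ∈ Finset.Ico 0 j, 1/lam (k+1) + ∑ k ∈ Finset.Ico j (j+j), 1/lam (k+1)
        + ∑ k ∈ Finset.Ico (j+j) (j+j+j), 1/lam (k+1) := by
    rw [Finset.range_eq_Ico, show 3*j = j+j+j by ring,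
      ← Finset.sum_Ico_consecutive _ (by omega : 0 ≤ j+j) (by omega : j+j ≤ j+j+j),
      ← Finset.sum_Ico_consecutive _ (by omega : 0 ≤ j) (by omega : j ≤ j+j)]
  rw [e]
  have h1 : ∑ k ∈ Finset.Ico 0 j, 1/lam (k+1) = ∑ k ∈ Finset.range j, 1/lam (k+1) := by
    rw [Finset.range_eq_Ico]
  have h2 := sum_inv_block hpos hmono j j
  have h3 := sum_inv_block hpos hmono j (j+j)
  rw [show j+j+j = (j+j)+j by ring] at e ⊢
  linarith
end Weights

lemma tcoef_eq (lam : ℕ → ℝ) (j : ℕ) :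
    tcoef lam j = (∑ k ∈ Finset.range j, 1/lam (k+1))⁻¹ := by
  rw [tcoef, ← Finset.Ico_add_one_right_eq_Icc, Finset.sum_Ico_eq_sum_range]
  simp only [Nat.add_sub_cancel_left, Nat.succ_sub_one, Nat.add_sub_cancel]
  congr 1
  exact Finset.sum_congr rfl fun i _ => by rw [add_comm]

lemma sum_inv_pos {lam : ℕ → ℝ} (hpos : ∀ k, 1 ≤ k → 0 < lam k) {j : ℕ} (hj : 1 ≤ j) :
    0 < ∑ k ∈ Finset.range j, 1/lam (k+1) := by
  apply Finset.sum_pos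
  · intro i _
    have := hpos (i+1) (by omega)
    positivity
  · exact ⟨0, Finset.mem_range.mpr (by omega)⟩

lemma tcoef_pos {lam : ℕ → ℝ} (hpos : ∀ k, 1 ≤ k → 0 < lam k) {j : ℕ} (hj : 1 ≤ j) :
    0 < tcoef lam j := by
  rw [tcoef_eq]
  exact inv_pos.mpr (sum_inv_pos hpos hj)

lemma tcoef_anti {lam : ℕ → ℝ} (hpos : ∀ k, 1 ≤ k → 0 < lam k) {m n : ℕ}
    (hm : 1 ≤ m) (hmn : m ≤ n) : tcoef lam n ≤ tcoef lam m := by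
  rw [tcoef_eq, tcoef_eq]
  apply inv_anti₀ (sum_inv_pos hpos hm)
  apply Finset.sum_le_sum_of_subset_of_nonneg (Finset.range_subset_range.mpr hmn)
  intro i _ _
  have := hpos (i+1) (by omega)
  positivity

def wfun (γ : ℝ) (N k : ℕ) : ℝ := (Real.pi * k - γ * Real.pi / 2) / ((N : ℝ) + 1/2 - γ/2)

lemma theta_pos {γ : ℝ} (hγ : γ < 1) (N : ℕ) : 0 < (N : ℝ) + 1/2 - γ/2 := by
  have : (0:ℝ) ≤ N := Nat.cast_nonneg N
  linarith

lemma wfun_strictMono {γ : ℝ} (hγ : γ < 1) (N : ℕ) : StrictMono (wfun γ N) := by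
  intro k k' h
  have hθ := theta_pos hγ N
  rw [wfun, wfun, div_lt_div_iff_of_pos_right hθ]
  have : (k : ℝ) < k' := Nat.cast_lt.mpr h
  nlinarith [Real.pi_pos]

lemma wfun_sin {γ : ℝ} (hγ : γ < 1) (N k : ℕ) :
    Real.sin (((N : ℝ) + 1/2 - γ/2) * wfun γ N k + γ * Real.pi / 2) = 0 := by
  have hθ := theta_pos hγ N
  have h : ((N : ℝ) + 1/2 - γ/2) * wfun γ N k + γ * Real.pi / 2 = (k : ℝ) * Real.pi := by
    rw [wfun, mul_div_cancel₀ _ (ne_of_gt hθ)]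
    ring
  rw [h, Real.sin_nat_mul_pi]

lemma rectA_eq (α β : ℝ) (N i j : ℕ) :
    rectA α β N i j = (Set.Ico (wfun α N i) (wfun α N (i+1))) ×ˢ
      (Set.Ico (wfun β N j) (wfun β N (j+1))) := by
  rw [rectA, wfun, wfun, wfun, wfun]
  congr 2 <;> push_cast <;> ring

lemma indicator_rectA (α β : ℝ) (N i j : ℕ) (x y : ℝ) :
    Set.indicator (rectA α β N i j) (fun _ => (1:ℝ)) (x, y)
      = (if x ∈ Set.Ico (wfun α N i) (wfun α N (i+1)) then (1:ℝ) else 0)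
        * (if y ∈ Set.Ico (wfun β N j) (wfun β N (j+1)) then (1:ℝ) else 0) := by
  classical
  rw [rectA_eq, Set.indicator_apply]
  by_cases hx : x ∈ Set.Ico (wfun α N i) (wfun α N (i+1)) <;>
    by_cases hy : y ∈ Set.Ico (wfun β N j) (wfun β N (j+1)) <;>
    simp [Set.mem_prod, hx, hy]

lemma struct1 (α β : ℝ) (hα : α < 1) (hβ : β < 1) (lam : ℕ → ℝ) (N : ℕ) (y : ℝ) :
    (∀ x, fN α β lam N x y = 0) ∨
    ∃ j0, 1 < j0 ∧ 2*j0+1 < N ∧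
      ∀ x, fN α β lam N x y =
        cellFun (wfun α N) ((N:ℝ)+1/2-α/2) (α*Real.pi/2)
          (fun _ => tcoef lam j0 * Real.sin (((N:ℝ)+1/2-β/2)*y + β*Real.pi/2))
          (j0+1) (2*j0) x := by
  classical
  by_cases h : ∃ j0, (1 < j0 ∧ 2*j0+1 < N) ∧ y ∈ Set.Ico (wfun β N j0) (wfun β N (j0+1))
  · obtain ⟨j0, ⟨hj1, hjN⟩, hy⟩ := h
    right
    refine ⟨j0, hj1, hjN, fun x => ?_⟩
    rw [fN]
    have hstep : ∀ i ∈ Finset.range N,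
        (∑ j ∈ Finset.range N, if j < i ∧ i < 2*j ∧ 1 < j ∧ 2*j+1 < N then
            tcoef lam j * Set.indicator (rectA α β N i j) (fun _ => (1:ℝ)) (x, y) *
              Real.sin (((N : ℝ) + 1/2 - α/2) * x + α * Real.pi / 2) *
              Real.sin (((N : ℝ) + 1/2 - β/2) * y + β * Real.pi / 2)
          else 0)
        = (if j0 < i ∧ i < 2*j0 then
            (tcoef lam j0 * Real.sin (((N:ℝ)+1/2-β/2)*y + β*Real.pi/2)) *
              (if x ∈ Set.Ico (wfun α N i) (wfun α N (i+1))
                then Real.sin (((N : ℝ) + 1/2 - α/2) * x + α * Real.pi / 2) else 0)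
          else 0) := by
      intro i _
      rw [Finset.sum_eq_single j0]
      · rw [indicator_rectA, if_pos hy]
        by_cases hc : j0 < i ∧ i < 2*j0
        · rw [if_pos ⟨hc.1, hc.2, hj1, hjN⟩, if_pos hc]
          by_cases hx : x ∈ Set.Ico (wfun α N i) (wfun α N (i+1))
          · rw [if_pos hx, if_pos hx]; ring
          · rw [if_neg hx, if_neg hx]; ring
        · rw [if_neg (by tauto), if_neg hc]
      · intro j _ hne
        by_cases hc : j < i ∧ i < 2*j ∧ 1 < j ∧ 2*j+1 < N
        · rw [if_pos hc, indicator_rectA]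
          have : y ∉ Set.Ico (wfun β N j) (wfun β N (j+1)) := by
            intro hy'
            exact hne (cell_unique (wfun_strictMono hβ N) hy' hy)
          rw [if_neg this]
          ring
        · exact if_neg hc
      · intro hj0
        exact absurd (Finset.mem_range.mpr (by omega)) hj0
    rw [Finset.sum_congr rfl hstep, ← Finset.sum_filter]
    have hfil : (Finset.range N).filter (fun i => j0 < i ∧ i < 2*j0)
        = Finset.Ico (j0+1) (2*j0) := by
      ext i
      simp only [Finset.mem_filter, Finset.mem_range, Finset.mem_Ico]
      omega
    rw [hfil, cellFun]
  · left
    push_neg at h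
    intro x
    rw [fN]
    apply Finset.sum_eq_zero
    intro i _
    apply Finset.sum_eq_zero
    intro j _
    by_cases hc : j < i ∧ i < 2*j ∧ 1 < j ∧ 2*j+1 < N
    · rw [if_pos hc, indicator_rectA, if_neg (h j ⟨hc.2.2.1, hc.2.2.2⟩)]
      ring
    · exact if_neg hc

lemma struct2 (α β : ℝ) (hα : α < 1) (hβ : β < 1) (lam : ℕ → ℝ) (N : ℕ) (x : ℝ) :
    (∀ y, fN α β lam N x y = 0) ∨
    ∃ i0, i0 < N ∧
      ∀ y, fN α β lam N x y =
        cellFun (wfun β N) ((N:ℝ)+1/2-β/2) (β*Real.pi/2)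
          (fun j => tcoef lam j * Real.sin (((N:ℝ)+1/2-α/2)*x + α*Real.pi/2))
          (max (i0/2+1) 2) (min i0 ((N-2)/2+1)) y := by
  classical
  by_cases h : ∃ i0, i0 < N ∧ x ∈ Set.Ico (wfun α N i0) (wfun α N (i0+1))
  · obtain ⟨i0, hi0N, hx⟩ := h
    right
    refine ⟨i0, hi0N, fun y => ?_⟩
    rw [fN, Finset.sum_comm]
    have hstep : ∀ j ∈ Finset.range N,
        (∑ i ∈ Finset.range N, if j < i ∧ i < 2*j ∧ 1 < j ∧ 2*j+1 < N then
            tcoef lam j * Set.indicator (rectA α β N i j) (fun _ => (1:ℝ)) (x, y) *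
              Real.sin (((N : ℝ) + 1/2 - α/2) * x + α * Real.pi / 2) *
              Real.sin (((N : ℝ) + 1/2 - β/2) * y + β * Real.pi / 2)
          else 0)
        = (if j < i0 ∧ i0 < 2*j ∧ 1 < j ∧ 2*j+1 < N then
            (tcoef lam j * Real.sin (((N:ℝ)+1/2-α/2)*x + α*Real.pi/2)) *
              (if y ∈ Set.Ico (wfun β N j) (wfun β N (j+1))
                then Real.sin (((N : ℝ) + 1/2 - β/2) * y + β * Real.pi / 2) else 0)
          else 0) := by
      intro j _
      rw [Finset.sum_eq_single i0]
      · rw [indicator_rectA, if_pos hx]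
        by_cases hc : j < i0 ∧ i0 < 2*j ∧ 1 < j ∧ 2*j+1 < N
        · rw [if_pos hc, if_pos hc]
          by_cases hy : y ∈ Set.Ico (wfun β N j) (wfun β N (j+1))
          · rw [if_pos hy, if_pos hy]; ring
          · rw [if_neg hy, if_neg hy]; ring
        · rw [if_neg hc, if_neg hc]
      · intro i _ hne
        by_cases hc : j < i ∧ i < 2*j ∧ 1 < j ∧ 2*j+1 < N
        · rw [if_pos hc, indicator_rectA]
          have : x ∉ Set.Ico (wfun α N i) (wfun α N (i+1)) := by
            intro hx'
            exact hne (cell_unique (wfun_strictMono hα N) hx' hx)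
          rw [if_neg this]
          ring
        · exact if_neg hc
      · intro hi0
        exact absurd (Finset.mem_range.mpr hi0N) hi0
    rw [Finset.sum_congr rfl hstep, ← Finset.sum_filter]
    have hfil : (Finset.range N).filter (fun j => j < i0 ∧ i0 < 2*j ∧ 1 < j ∧ 2*j+1 < N)
        = Finset.Ico (max (i0/2+1) 2) (min i0 ((N-2)/2+1)) := by
      ext j
      simp only [Finset.mem_filter, Finset.mem_range, Finset.mem_Ico, Nat.lt_min,
        Nat.max_le, le_min_iff, max_le_iff]
      omega
    rw [hfil, cellFun]
  · left
    push_neg at h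
    intro y
    rw [fN]
    apply Finset.sum_eq_zero
    intro i hi
    apply Finset.sum_eq_zero
    intro j _
    by_cases hc : j < i ∧ i < 2*j ∧ 1 < j ∧ 2*j+1 < N
    · rw [if_pos hc, indicator_rectA, if_neg (h i (Finset.mem_range.mp hi))]
      ring
    · exact if_neg hc

lemma cell_sum_bound {lam : ℕ → ℝ}
    (hpos : ∀ k, 1 ≤ k → 0 < lam k) (hmono : ∀ k, 1 ≤ k → lam k ≤ lam (k + 1))
    {w : ℕ → ℝ} {θ c : ℝ} {τ : ℕ → ℝ} {m₁ m₂ : ℕ} {j₀ : ℕ}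
    (hθ : 0 < θ) (hw : StrictMono w) (hw0 : ∀ k, Real.sin (θ * w k + c) = 0)
    (hj₀ : 1 ≤ j₀)
    (hτ : ∀ j, m₁ ≤ j → j < m₂ → |τ j| ≤ tcoef lam j₀)
    (hlen : θ * (w m₂ - w m₁) + 4 ≤ 6 * (j₀:ℝ))
    {n : ℕ} {I : Fin n → ℝ × ℝ}
    (hlt : ∀ i, (I i).1 < (I i).2)
    (hdisj : Pairwise fun i j => Set.Ioo (I i).1 (I i).2 ∩ Set.Ioo (I j).1 (I j).2 = ∅) :
    ∑ i : Fin n, |cellFun w θ c τ m₁ m₂ (I i).2 - cellFun w θ c τ m₁ m₂ (I i).1|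
        / lam ((i:ℕ)+1) ≤ 6 := by
  classical
  set g := cellFun w θ c τ m₁ m₂ with hg
  set t := tcoef lam j₀ with ht
  have ht0 : 0 < t := tcoef_pos hpos hj₀
  rcases le_or_gt m₂ m₁ with hm | hm
  · -- empty cell range: g = 0
    have hg0 : ∀ z, g z = 0 := by
      intro z
      rw [hg, cellFun, Finset.Ico_eq_empty (by omega), Finset.sum_empty]
    simp only [hg0, sub_zero, abs_zero, zero_div, Finset.sum_const_zero]
    norm_num
  · set s := w m₁ with hs
    set e := w m₂ with he
    have hse : s ≤ e := le_of_lt (hw hm)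
    set bfn : Fin n → ℝ := fun i =>
      if ((I i).1 ∈ Set.Icc s e ∨ (I i).2 ∈ Set.Icc s e)
        then min 2 (θ * ((I i).2 - (I i).1)) else 0 with hbfn
    have hkey : ∀ i : Fin n, |g (I i).2 - g (I i).1| ≤ t * bfn i := by
      intro i
      rw [hbfn]
      dsimp only
      by_cases hc : ((I i).1 ∈ Set.Icc s e ∨ (I i).2 ∈ Set.Icc s e)
      · rw [if_pos hc]
        exact cellFun_diff_le hθ hw hw0 ht0.le hτ (hlt i).le
      · rw [if_neg hc]
        push_neg at hc
        have h1 : g (I i).1 = 0 := by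
          by_contra hne
          exact hc.1 (cellFun_support hw hne)
        have h2 : g (I i).2 = 0 := by
          by_contra hne
          exact hc.2 (cellFun_support hw hne)
        rw [h1, h2]
        simp
    have hbfn0 : ∀ i, 0 ≤ bfn i := by
      intro i
      rw [hbfn]; dsimp only
      split_ifs with h1
      · exact le_min (by norm_num) (mul_nonneg hθ.le (by linarith [hlt i]))
      · exact le_rfl
    have hbfn2 : ∀ i, bfn i ≤ 2 := by
      intro i
      rw [hbfn]; dsimp only
      split_ifs with h1
      · exact min_le_left _ _
      · norm_num
    have hbfnsum : ∑ i : Fin n, bfn i ≤ 2 * ((3*j₀ : ℕ) : ℝ) := by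
      have h1 := sum_min_le hθ hse hlt hdisj
      have h2 : (2:ℝ) * ((3*j₀ : ℕ) : ℝ) = 6 * (j₀:ℝ) := by push_cast; ring
      rw [h2]
      calc ∑ i : Fin n, bfn i ≤ θ * (e - s) + 4 := h1
        _ ≤ 6 * (j₀:ℝ) := hlen
    -- switch to range sums
    set B : ℕ → ℝ := fun m => if hm : m < n then bfn ⟨m, hm⟩ else 0 with hB
    have hBeq : ∀ i : Fin n, bfn i = B (i : ℕ) := by
      intro i
      rw [hB]
      dsimp only
      rw [dif_pos i.isLt]
    have hconv : ∀ f : Fin n → ℝ, (∀ i, f i = B (i:ℕ) / lam ((i:ℕ)+1)) →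
        ∑ i : Fin n, f i = ∑ m ∈ Finset.range n, B m / lam (m+1) := by
      intro f hf
      rw [Finset.sum_congr rfl (fun i _ => hf i)]
      exact Fin.sum_univ_eq_sum_range (fun m => B m / lam (m+1)) n
    have hBsum : ∑ m ∈ Finset.range n, B m = ∑ i : Fin n, bfn i := by
      rw [Finset.sum_congr rfl (fun i (_ : i ∈ Finset.univ) => hBeq i)]
      exact (Fin.sum_univ_eq_sum_range B n).symm
    have hB0 : ∀ m, 0 ≤ B m := by
      intro m; rw [hB]; dsimp only
      split_ifs with h1
      · exact hbfn0 _
      · exact le_rfl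
    have hB2 : ∀ m, B m ≤ 2 := by
      intro m; rw [hB]; dsimp only
      split_ifs with h1
      · exact hbfn2 _
      · norm_num
    have hw1 := weightR hpos hmono n (3*j₀) B hB0 hB2 (by rw [hBsum]; exact hbfnsum)
    have hw2 := sum_inv_triple (lam := lam) hpos hmono j₀
    have hS : 0 < ∑ k ∈ Finset.range j₀, 1/lam (k+1) := sum_inv_pos hpos hj₀
    calc ∑ i : Fin n, |g (I i).2 - g (I i).1| / lam ((i:ℕ)+1)
        ≤ ∑ i : Fin n, t * bfn i / lam ((i:ℕ)+1) := by
          apply Finset.sum_le_sum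
          intro i _
          rw [div_eq_mul_one_div (|g (I i).2 - g (I i).1|) (lam ((i:ℕ)+1)),
            div_eq_mul_one_div (t * bfn i) (lam ((i:ℕ)+1))]
          apply mul_le_mul_of_nonneg_right (hkey i)
          exact le_of_lt (one_div_pos.mpr (hpos _ (by omega)))
      _ = t * ∑ i : Fin n, bfn i / lam ((i:ℕ)+1) := by
          rw [Finset.mul_sum]
          exact Finset.sum_congr rfl fun i _ => by rw [mul_div_assoc]
      _ = t * ∑ m ∈ Finset.range n, B m / lam (m+1) := by
          rw [hconv (fun i => bfn i / lam ((i:ℕ)+1)) (fun i => by rw [hBeq i])]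
      _ ≤ t * (2 * ∑ k ∈ Finset.range (3*j₀), 1 / lam (k+1)) :=
          mul_le_mul_of_nonneg_left hw1 ht0.le
      _ ≤ t * (2 * (3 * ∑ k ∈ Finset.range j₀, 1 / lam (k+1))) := by
          apply mul_le_mul_of_nonneg_left _ ht0.le
          apply mul_le_mul_of_nonneg_left _ (by norm_num)
          simpa using hw2
      _ = 6 * (t * ∑ k ∈ Finset.range j₀, 1 / lam (k+1)) := by ring
      _ = 6 := by
          rw [ht, tcoef_eq]
          rw [inv_mul_cancel₀ (ne_of_gt (by simpa using hS))]
          norm_num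

lemma V1_bound {α β : ℝ} (hα1 : α < 1) (hβ1 : β < 1) {lam : ℕ → ℝ}
    (hpos : ∀ k, 1 ≤ k → 0 < lam k) (hmono : ∀ k, 1 ≤ k → lam k ≤ lam (k + 1))
    (N : ℕ) : ∀ v ∈ V1sums lam (fN α β lam N), v ≤ 6 := by
  rintro v ⟨y, n, I, hNO, rfl⟩
  have hlt : ∀ i, (I i).1 < (I i).2 := fun i => (hNO.1 i).2.1
  rcases struct1 α β hα1 hβ1 lam N y with h0 | ⟨j0, hj1, hjN, hfeq⟩
  · simp only [h0, sub_zero, abs_zero, zero_div, Finset.sum_const_zero]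
    norm_num
  · have hθ := theta_pos hα1 N
    have hwm := wfun_strictMono hα1 N
    have hτ : ∀ j, j0+1 ≤ j → j < 2*j0 →
        |tcoef lam j0 * Real.sin (((N:ℝ)+1/2-β/2)*y + β*Real.pi/2)| ≤ tcoef lam j0 := by
      intro j _ _
      rw [abs_mul]
      have h1 := Real.abs_sin_le_one (((N:ℝ)+1/2-β/2)*y + β*Real.pi/2)
      have h2 : 0 < tcoef lam j0 := tcoef_pos hpos (by omega)
      rw [abs_of_pos h2]
      nlinarith [abs_nonneg (Real.sin (((N:ℝ)+1/2-β/2)*y + β*Real.pi/2))]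
    have hlen : ((N:ℝ)+1/2-α/2) * (wfun α N (2*j0) - wfun α N (j0+1)) + 4 ≤ 6 * (j0:ℝ) := by
      have hcomp : ((N:ℝ)+1/2-α/2) * (wfun α N (2*j0) - wfun α N (j0+1))
          = Real.pi * ((2*j0:ℕ):ℝ) - Real.pi * ((j0+1:ℕ):ℝ) := by
        rw [wfun, wfun, div_sub_div_same, mul_div_cancel₀ _ (ne_of_gt hθ)]
        ring
      rw [hcomp]
      have hπ := Real.pi_le_four
      have hπ0 := Real.pi_pos
      have hj : (2:ℝ) ≤ (j0:ℝ) := by exact_mod_cast hj1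
      push_cast
      nlinarith
    have hmain := cell_sum_bound hpos hmono hθ hwm (fun k => wfun_sin hα1 N k)
      (by omega : 1 ≤ j0) hτ hlen hlt hNO.2
    simp only [hfeq]
    exact hmain

lemma V2_bound {α β : ℝ} (hα1 : α < 1) (hβ1 : β < 1) {lam : ℕ → ℝ}
    (hpos : ∀ k, 1 ≤ k → 0 < lam k) (hmono : ∀ k, 1 ≤ k → lam k ≤ lam (k + 1))
    (N : ℕ) : ∀ v ∈ V2sums lam (fN α β lam N), v ≤ 6 := by
  rintro v ⟨x, n, J, hNO, rfl⟩
  have hlt : ∀ i, (J i).1 < (J i).2 := fun i => (hNO.1 i).2.1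
  rcases struct2 α β hα1 hβ1 lam N x with h0 | ⟨i0, hi0N, hfeq⟩
  · simp only [h0, sub_zero, abs_zero, zero_div, Finset.sum_const_zero]
    norm_num
  · have hθ := theta_pos hβ1 N
    have hwm := wfun_strictMono hβ1 N
    set j1 := max (i0/2+1) 2 with hj1def
    set j2 := min i0 ((N-2)/2+1) with hj2def
    have hj12 : 2 ≤ j1 := le_max_right _ _
    have hτ : ∀ j, j1 ≤ j → j < j2 →
        |tcoef lam j * Real.sin (((N:ℝ)+1/2-α/2)*x + α*Real.pi/2)| ≤ tcoef lam j1 := by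
      intro j hj _
      rw [abs_mul]
      have h1 := Real.abs_sin_le_one (((N:ℝ)+1/2-α/2)*x + α*Real.pi/2)
      have h2 : 0 < tcoef lam j := tcoef_pos hpos (by omega)
      have h3 : tcoef lam j ≤ tcoef lam j1 := tcoef_anti hpos (by omega) hj
      rw [abs_of_pos h2]
      nlinarith [abs_nonneg (Real.sin (((N:ℝ)+1/2-α/2)*x + α*Real.pi/2))]
    have hlen : ((N:ℝ)+1/2-β/2) * (wfun β N j2 - wfun β N j1) + 4 ≤ 6 * (j1:ℝ) := by
      have hj1R : (2:ℝ) ≤ (j1:ℝ) := by exact_mod_cast hj12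
      rcases le_or_gt j2 j1 with hj | hj
      · have hw : wfun β N j2 - wfun β N j1 ≤ 0 := by
          have := hwm.monotone hj
          linarith
        nlinarith
      · have hcomp : ((N:ℝ)+1/2-β/2) * (wfun β N j2 - wfun β N j1)
            = Real.pi * (j2:ℝ) - Real.pi * (j1:ℝ) := by
          rw [wfun, wfun, div_sub_div_same, mul_div_cancel₀ _ (ne_of_gt hθ)]
          ring
        rw [hcomp]
        have hπ := Real.pi_le_four
        have hπ0 := Real.pi_pos
        have hnat : j2 + 1 ≤ 2*j1 := by omega
        have hR : (j2:ℝ) + 1 ≤ 2*(j1:ℝ) := by exact_mod_cast hnat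
        have hR2 : (j1:ℝ) ≤ (j2:ℝ) := by exact_mod_cast hj.le
        nlinarith
    have hmain := cell_sum_bound hpos hmono hθ hwm (fun k => wfun_sin hβ1 N k)
      (by omega : 1 ≤ j1) hτ hlen hlt hNO.2
    simp only [hfeq]
    exact hmain

end GS

/-- **Estimates (30), (31) of Goginava–Sahakian.**
The functions `f_N` from the counterexample construction have partial `Λ`-variations
bounded by a constant `c` independent of `N`; in particular `f_N ∈ PΛBV` uniformly. -/
theorem fN_partial_variation_bounded
    (α β : ℝ) (hα0 : 0 < α) (hα1 : α < 1) (hβ0 : 0 < β) (hβ1 : β < 1)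
    (hαβ : α + β < 1)
    (lam : ℕ → ℝ)
    (hlam_pos : ∀ k, 1 ≤ k → 0 < lam k)
    (hlam1 : 1 < lam 1)
    (hlam_mono : ∀ k, 1 ≤ k → lam k ≤ lam (k + 1))
    (hlam_top : Tendsto lam atTop atTop)
    (hdec : ∀ k, 1 ≤ k →
      lam (k + 1) / ((k : ℝ) + 1) ^ (1 - (α + β)) ≤ lam k / (k : ℝ) ^ (1 - (α + β)))
    (hzero : Tendsto (fun k : ℕ => lam k / (k : ℝ) ^ (1 - (α + β))) atTop (nhds 0)) :
    ∃ c : ℝ, 0 < c ∧ ∀ N : ℕ, 5 ≤ N →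
      (∀ v ∈ V1sums lam (fN α β lam N), v ≤ c) ∧
      (∀ v ∈ V2sums lam (fN α β lam N), v ≤ c) ∧
      PLambdaBV lam (fN α β lam N) := by
  refine ⟨6, by norm_num, fun N _ => ?_⟩
  have h1 := GS.V1_bound hα1 hβ1 hlam_pos hlam_mono N
  have h2 := GS.V2_bound hα1 hβ1 hlam_pos hlam_mono N
  exact ⟨h1, h2, ⟨6, fun v hv => h1 v hv⟩, ⟨6, fun v hv => h2 v hv⟩⟩

end
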